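/- A commutative reduced ring R has no sd-ideal if and only if R satisfies property (A) and the minimal prime spectrum Min(R) with the Zariski topology is compact. -/

import Mathlib

section Aux

variable {R : Type*} [CommRing R] [IsReduced R]

/-- In a reduced ring, every element of a minimal prime has a nonzero annihilator
outside the prime. -/
lemma aux_exists_ann {P : Ideal R} (hP : P ∈ minimalPrimes R) {x : R} (hx : x ∈ P) :
    ∃ c, c ∉ P ∧ c * x = 0 := by
  haveI hPp : P.IsPrime := hP.1.1
  by_contra hcon
  push_neg at hcon
  set M : Submonoid R := Submonoid.closure (insert x ((P : Set R)ᶜ)) with hM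
  have key : ∀ y ∈ M, ∃ c, c ∉ P ∧ ∃ n : ℕ, y = c * x ^ n := by
    intro y hy
    induction hy using Submonoid.closure_induction with
    | mem z hz =>
      rcases hz with rfl | hz
      · exact ⟨1, hPp.ne_top ∘ (Ideal.eq_top_iff_one P).mpr, 1, by ring⟩
      · exact ⟨z, hz, 0, by ring⟩
    | one => exact ⟨1, hPp.ne_top ∘ (Ideal.eq_top_iff_one P).mpr, 0, by ring⟩
    | mul a b _ _ iha ihb =>
      obtain ⟨c, hc, n, rfl⟩ := iha
      obtain ⟨d, hd, m, rfl⟩ := ihb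
      exact ⟨c * d, fun h => ((hPp.mem_or_mem h).elim hc hd), n + m, by ring⟩
  have hdisj : Disjoint ((⊥ : Ideal R) : Set R) (M : Set R) := by
    rw [Set.disjoint_left]
    rintro z hz hzM
    rw [SetLike.mem_coe, Ideal.mem_bot] at hz
    subst hz
    obtain ⟨c, hc, n, hcn⟩ := key 0 hzM
    rcases Nat.eq_zero_or_pos n with rfl | hn
    · simp at hcn
      exact hc (hcn ▸ P.zero_mem)
    · have h1 : (c * x) ^ n = 0 := by
        have : c ^ n * x ^ n = c ^ (n - 1) * (c * x ^ n) := by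
          rw [← mul_assoc, ← pow_succ, Nat.sub_add_cancel hn]
        rw [mul_pow, this, ← hcn, mul_zero]
      have h2 : c * x = 0 := by
        have := IsReduced.eq_zero (c * x) ⟨n, h1⟩
        exact this
      exact hcon c hc h2
  obtain ⟨Q, hQp, -, hQdisj⟩ := Ideal.exists_le_prime_disjoint (⊥ : Ideal R) M hdisj
  have hQP : Q ≤ P := by
    intro q hq
    by_contra hqP
    exact Set.disjoint_left.mp hQdisj hq
      (Submonoid.subset_closure (Set.mem_insert_of_mem _ hqP))
  have hPQ : P ≤ Q := hP.2 ⟨hQp, bot_le⟩ hQP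
  exact Set.disjoint_left.mp hQdisj (hPQ hx)
    (Submonoid.subset_closure (Set.mem_insert _ _))

/-- In a reduced ring, every element of a minimal prime is a zero divisor. -/
lemma aux_zd {P : Ideal R} (hP : P ∈ minimalPrimes R) {x : R} (hx : x ∈ P) :
    x ∉ nonZeroDivisors R := by
  obtain ⟨c, hc, hcx⟩ := aux_exists_ann hP hx
  intro hnzd
  exact hc ((mem_nonZeroDivisors_iff_right.mp hnzd c hcx) ▸ P.zero_mem)

/-- A common annihilator outside `P` for a finite subset of a minimal prime `P`. -/
lemma aux_finset_ann {P : Ideal R} (hP : P ∈ minimalPrimes R) (s : Finset R) :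
    (s : Set R) ⊆ P → ∃ c, c ∉ P ∧ ∀ g ∈ s, c * g = 0 := by
  haveI hPp : P.IsPrime := hP.1.1
  classical
  induction s using Finset.induction_on with
  | empty =>
    exact fun _ => ⟨1, hPp.ne_top ∘ (Ideal.eq_top_iff_one P).mpr, by simp⟩
  | @insert a s ha ih =>
    intro hins
    have hsub : (s : Set R) ⊆ P := fun g hg => hins (by simp [hg])
    obtain ⟨c, hc, hcs⟩ := ih hsub
    have haP : a ∈ P := hins (by simp)
    obtain ⟨d, hd, hda⟩ := aux_exists_ann hP haP
    refine ⟨c * d, fun h => ((hPp.mem_or_mem h).elim hc hd), ?_⟩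
    intro g hg
    rcases Finset.mem_insert.mp hg with rfl | hg
    · rw [mul_assoc, hda, mul_zero]
    · rw [mul_comm c d, mul_assoc, hcs g hg, mul_zero]

lemma aux_sInf_min : sInf (minimalPrimes R) = (⊥ : Ideal R) := by
  have h1 : minimalPrimes R = (⊥ : Ideal R).minimalPrimes := rfl
  rw [h1, Ideal.sInf_minimalPrimes]
  have : (⊥ : Ideal R).radical = nilradical R := rfl
  rw [this, nilradical_eq_zero]
  rfl

end Aux

/-- The minimal prime spectrum of `R`, with the subspace (Zariski) topology. -/
abbrev MinSpec (R : Type*) [CommRing R] :=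
  {P : PrimeSpectrum R // P.asIdeal ∈ minimalPrimes R}

/-- R has no sd-ideal iff R has property (A) and Min(R) is compact. -/
theorem no_sd_iff_propA_and_compact (R : Type*) [CommRing R] [IsReduced R] :
    (¬ ∃ I : Ideal R, (∀ x ∈ I, x ∉ nonZeroDivisors R) ∧
        ∀ P ∈ minimalPrimes R, ¬ I ≤ P) ↔
    ((∀ I : Ideal R, I.FG → (∀ x ∈ I, x ∉ nonZeroDivisors R) →
        ∃ a : R, a ≠ 0 ∧ ∀ x ∈ I, a * x = 0) ∧
      CompactSpace (MinSpec R)) := by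
  classical
  set s : Set (PrimeSpectrum R) := {P : PrimeSpectrum R | P.asIdeal ∈ minimalPrimes R} with hs
  constructor
  · intro H
    push_neg at H
    constructor
    · -- property (A)
      intro J hJfg hJz
      obtain ⟨P, hPmin, hJP⟩ := H J hJz
      haveI hPp : P.IsPrime := hPmin.1.1
      obtain ⟨sF, hspan⟩ := hJfg
      have hsub : (sF : Set R) ⊆ P := fun g hg =>
        hJP (hspan ▸ Ideal.subset_span hg)
      obtain ⟨c, hc, hcs⟩ := aux_finset_ann hPmin sF hsub
      refine ⟨c, fun h => hc (h ▸ P.zero_mem), ?_⟩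
      intro x hx
      have hx' : x ∈ Ideal.span (sF : Set R) := hspan ▸ hx
      have hker : Ideal.span (sF : Set R) ≤ LinearMap.ker (LinearMap.mul R R c) := by
        rw [Ideal.span_le]
        intro g hg
        simpa using hcs g hg
      simpa using hker hx'
    · -- compactness
      suffices hcomp : IsCompact s by
        exact isCompact_iff_compactSpace.mp hcomp
      apply isCompact_of_finite_subfamily_closed
      intro ι t htc hts
      have hT : ∀ i, ∃ T : Set R, t i = PrimeSpectrum.zeroLocus T := fun i =>
        (PrimeSpectrum.isClosed_iff_zeroLocus _).mp (htc i)
      choose T hTeq using hT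
      by_contra hcon
      push_neg at hcon
      have hne : ∀ u : Finset ι, (s ∩ ⋂ i ∈ u, t i).Nonempty := hcon
      set I : Ideal R := Ideal.span (⋃ i, T i) with hI
      have claim1 : ∀ x ∈ I, x ∉ nonZeroDivisors R := by -- I consists of zero divisors
        intro x hx
        obtain ⟨F, hFsub, hxF⟩ := Submodule.mem_span_finite_of_mem_span hx
        -- choose for each g ∈ F an index
        have hch : ∀ g : F, ∃ i, (g : R) ∈ T i := fun g => by
          have := hFsub g.2
          simpa using this
        choose ind hind using hch
        set u : Finset ι := F.attach.image ind with hu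
        obtain ⟨p, hps, hpint⟩ := hne u
        have hFp : (F : Set R) ⊆ p.asIdeal := by
          intro g hg
          have hiu : ind ⟨g, hg⟩ ∈ u := Finset.mem_image.mpr ⟨⟨g, hg⟩, Finset.mem_attach _ _, rfl⟩
          have : p ∈ t (ind ⟨g, hg⟩) := by
            have := Set.mem_iInter₂.mp hpint (ind ⟨g, hg⟩) hiu
            exact this
          rw [hTeq] at this
          exact this (hind ⟨g, hg⟩)
        have hxp : x ∈ p.asIdeal := by
          have : Ideal.span (F : Set R) ≤ p.asIdeal := Ideal.span_le.mpr hFp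
          exact this hxF
        exact aux_zd hps hxp
      have claim2 : ∀ P ∈ minimalPrimes R, ¬ I ≤ P := by
        intro P hPmin hIP
        have hps : (⟨P, hPmin.1.1⟩ : PrimeSpectrum R) ∈ s := hPmin
        have hnotint : (⟨P, hPmin.1.1⟩ : PrimeSpectrum R) ∉ ⋂ i, t i := by
          intro h
          have : (⟨P, hPmin.1.1⟩ : PrimeSpectrum R) ∈ s ∩ ⋂ i, t i := ⟨hps, h⟩
          rw [hts] at this
          exact this
        rw [Set.mem_iInter] at hnotint
        push_neg at hnotint
        obtain ⟨i, hi⟩ := hnotint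
        rw [hTeq, PrimeSpectrum.mem_zeroLocus, Set.not_subset] at hi
        obtain ⟨g, hgT, hgP⟩ := hi
        exact hgP (hIP (Ideal.subset_span (Set.mem_iUnion.mpr ⟨i, hgT⟩)))
      obtain ⟨P, hPmin, hIP⟩ := H I claim1
      exact claim2 P hPmin hIP
  · rintro ⟨hA, hC⟩ ⟨I, hIz, hImin⟩
    have hsc : IsCompact s := isCompact_iff_compactSpace.mpr hC
    -- cover s by basic opens from elements of I
    have hcover : s ⊆ ⋃ a : {a : R // a ∈ I}, ↑(PrimeSpectrum.basicOpen (a : R)) := by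
      intro p hp
      have := hImin p.asIdeal hp
      rw [SetLike.le_def] at this
      push_neg at this
      obtain ⟨a, haI, haP⟩ := this
      exact Set.mem_iUnion.mpr ⟨⟨a, haI⟩, haP⟩
    obtain ⟨F, hF⟩ := hsc.elim_finite_subcover
      (fun a : {a : R // a ∈ I} => ↑(PrimeSpectrum.basicOpen (a : R)))
      (fun a => (PrimeSpectrum.basicOpen (a : R)).2) hcover
    set G : Finset R := F.image Subtype.val with hG
    set J : Ideal R := Ideal.span (G : Set R) with hJ
    have hJI : J ≤ I := Ideal.span_le.mpr (by
      intro g hg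
      obtain ⟨b, _, rfl⟩ := Finset.mem_image.mp hg
      exact b.2)
    have hJfg : J.FG := ⟨G, rfl⟩
    obtain ⟨a, ha0, haann⟩ := hA J hJfg (fun x hx => hIz x (hJI hx))
    apply ha0
    have hamem : a ∈ sInf (minimalPrimes R) := by
      rw [Ideal.mem_sInf]
      intro P hPmin
      haveI hPp : P.IsPrime := hPmin.1.1
      have hps : (⟨P, hPp⟩ : PrimeSpectrum R) ∈ s := hPmin
      obtain ⟨b, hbF, hbP⟩ := Set.mem_iUnion₂.mp (hF hps)
      have hbJ : (b : R) ∈ J :=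
        Ideal.subset_span (Finset.mem_coe.mpr (Finset.mem_image.mpr ⟨b, hbF, rfl⟩))
      have : a * (b : R) ∈ P := (haann _ hbJ) ▸ P.zero_mem
      rcases hPp.mem_or_mem this with h | h
      · exact h
      · exact absurd h hbP
    rwa [aux_sInf_min, Ideal.mem_bot] at hamem
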